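/- Let A be a transposed Poisson algebra and M a transposed Poisson A-module with associative actions, meaning (ab)⊳m = b·(a⊳m) for all a ∈ A, b ∈ A^A, m ∈ M. Then for b ∈ A^A and any a ∈ A, m ∈ M: a⊳(b·m) = 2b·(a⊳m) − (ab)⊳m = b·(a⊳m). -/
import Mathlib


open TensorProduct

/-- A transposed Poisson algebra structure on a commutative unital `k`-algebra `A`:
a Lie bracket satisfying the transposed Leibniz rule `2a{b,c} = {ab,c} + {b,ac}`. -/
structure TPA (k A : Type*) [Field k] [CharZero k] [CommRing A] [Algebra k A] where
  br : A →ₗ[k] A →ₗ[k] A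
  skew : ∀ a b, br a b = - br b a
  jacobi : ∀ a b c, br a (br b c) = br (br a b) c + br b (br a c)
  leibniz : ∀ a b c, 2 * a * br b c = br (a * b) c + br b (a * c)

/-- The transposed Poisson center `A^A = {b | b{a,a'} = {ba,a'} for all a,a'}`. -/
def TPA.center {k A : Type*} [Field k] [CharZero k] [CommRing A] [Algebra k A]
    (P : TPA k A) : Set A := {b | ∀ a a', b * P.br a a' = P.br (b * a) a'}

/-- A transposed Poisson `A`-module: an `A`-module action `sm` and a Lie `A`-module
action `lact` satisfying `2{a,b}·m = a⊳(b·m) − b⊳(a·m)` and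
`2a·(b⊳m) = (ab)⊳m + b⊳(a·m)`. -/
structure TPMod (k A : Type*) [Field k] [CharZero k] [CommRing A] [Algebra k A]
    (P : TPA k A) (M : Type*) [AddCommGroup M] [Module k M] where
  sm : A →ₗ[k] M →ₗ[k] M
  lact : A →ₗ[k] M →ₗ[k] M
  sm_one : ∀ m, sm 1 m = m
  sm_mul : ∀ a b m, sm (a * b) m = sm a (sm b m)
  lact_br : ∀ a b m, lact (P.br a b) m = lact a (lact b m) - lact b (lact a m)
  compat1 : ∀ a b m, 2 • sm (P.br a b) m = lact a (sm b m) - lact b (sm a m)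
  compat2 : ∀ a b m, 2 • sm a (lact b m) = lact (a * b) m + lact b (sm a m)

theorem associative_actions_identity {k A : Type*} [Field k] [CharZero k]
    [CommRing A] [Algebra k A] (P : TPA k A) {M : Type*} [AddCommGroup M]
    [Module k M] (Pm : TPMod k A P M)
    (hassoc : ∀ (a b : A), b ∈ P.center → ∀ m : M,
      Pm.lact (a * b) m = Pm.sm b (Pm.lact a m)) :
    ∀ (a b : A), b ∈ P.center → ∀ m : M,
      Pm.lact a (Pm.sm b m) = 2 • Pm.sm b (Pm.lact a m) - Pm.lact (a * b) m ∧
      Pm.lact a (Pm.sm b m) = Pm.sm b (Pm.lact a m) := by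
  intro a b hb m
  have h := Pm.compat2 b a m
  rw [mul_comm b a] at h
  have h1 : Pm.lact a (Pm.sm b m) = 2 • Pm.sm b (Pm.lact a m) - Pm.lact (a * b) m := by
    rw [h]; abel
  refine ⟨h1, ?_⟩
  rw [h1, hassoc a b hb m, two_smul]; abel
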